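/- Let (X_n) be i.i.d. positive random variables with E[X_1] = τ < ∞ and N(t) the associated renewal counting process. Then E[N(t)]/t → 1/τ as t → ∞ (Elementary Renewal Theorem). -/

import Mathlib

open MeasureTheory ProbabilityTheory Filter

/-- Renewal epoch: `rS X n ω = X_1 + ... + X_n` (0-indexed: sum of `X 0, ..., X (n-1)`). -/
noncomputable def rS {Ω : Type*} (X : ℕ → Ω → ℝ) (n : ℕ) (ω : Ω) : ℝ :=
  ∑ i ∈ Finset.range n, X i ω

/-- Renewal counting process: `rN X t ω = sup {n : S_n ≤ t}`. -/
noncomputable def rN {Ω : Type*} (X : ℕ → Ω → ℝ) (t : ℝ) (ω : Ω) : ℕ :=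
  sSup {n | rS X n ω ≤ t}

open scoped ENNReal
set_option linter.unusedSectionVars false
set_option linter.unusedVariables false
set_option maxHeartbeats 1000000

section Renewal
variable {Ω : Type*} [MeasurableSpace Ω] {μ : Measure Ω} [IsProbabilityMeasure μ] {Y : ℕ → Ω → ℝ}

lemma rS_meas (hm : ∀ n, Measurable (Y n)) (n : ℕ) : Measurable (rS Y n) := by
  unfold rS; exact Finset.measurable_sum _ (fun i _ => hm i)
lemma rS_fun_eq (n : ℕ) : rS Y n = ∑ j ∈ Finset.range n, Y j := by ext ω; simp [rS]
lemma rS_succ (n : ℕ) (ω : Ω) : rS Y (n + 1) ω = rS Y n ω + Y n ω := by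
  simp [rS, Finset.sum_range_succ]
lemma rS_strictMono (hpos : ∀ n ω, 0 < Y n ω) (ω : Ω) :
    StrictMono (fun n => rS Y n ω) := by
  apply strictMono_nat_of_lt_succ
  intro n; simp only [rS_succ]; linarith [hpos n ω]

/-- ρ, the Laplace transform of `Y 0` at 1. -/
noncomputable def rRho {Ω : Type*} [MeasurableSpace Ω] (μ : Measure Ω) (Y : ℕ → Ω → ℝ) : ℝ≥0∞ :=
  ∫⁻ ω, ENNReal.ofReal (Real.exp (-(Y 0 ω))) ∂μ

lemma phi_meas : Measurable (fun x : ℝ => ENNReal.ofReal (Real.exp (-x))) :=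
  (Real.measurable_exp.comp measurable_neg).ennreal_ofReal

lemma rRho_lt_one (hm : ∀ n, Measurable (Y n)) (hpos : ∀ n ω, 0 < Y n ω) :
    rRho μ Y < 1 := by
  have hgm : Measurable (fun ω => Real.exp (-(Y 0 ω))) :=
    Real.measurable_exp.comp (hm 0).neg
  have hglt : ∀ ω, Real.exp (-(Y 0 ω)) < 1 := fun ω => by
    rw [Real.exp_lt_one_iff]; linarith [hpos 0 ω]
  have hgpos : ∀ ω, 0 < Real.exp (-(Y 0 ω)) := fun ω => Real.exp_pos _
  have hint : Integrable (fun ω => Real.exp (-(Y 0 ω))) μ := by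
    refine Integrable.mono' (integrable_const 1) hgm.aestronglyMeasurable ?_
    filter_upwards with ω
    rw [Real.norm_eq_abs, abs_of_pos (hgpos ω)]
    exact (hglt ω).le
  have h1 : rRho μ Y = ENNReal.ofReal (∫ ω, Real.exp (-(Y 0 ω)) ∂μ) :=
    (ofReal_integral_eq_lintegral_ofReal hint
      (Filter.Eventually.of_forall fun ω => (hgpos ω).le)).symm
  rw [h1]
  have h2 : ∫ ω, Real.exp (-(Y 0 ω)) ∂μ < 1 := by
    have hsub : Integrable (fun ω => 1 - Real.exp (-(Y 0 ω))) μ :=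
      (integrable_const 1).sub hint
    have hp : 0 < ∫ ω, (1 - Real.exp (-(Y 0 ω))) ∂μ := by
      rw [integral_pos_iff_support_of_nonneg_ae _ hsub]
      · have : Function.support (fun ω => 1 - Real.exp (-(Y 0 ω))) = Set.univ := by
          ext ω; simp only [Function.mem_support, Set.mem_univ, iff_true]
          have := hglt ω; intro h; linarith [h]
        rw [this]; simp
      · filter_upwards with ω; simp only [Pi.zero_apply]; linarith [hglt ω]
    rw [integral_sub (integrable_const 1) hint, integral_const] at hp
    simp only [probReal_univ, smul_eq_mul, one_mul, mul_one] at hp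
    linarith
  calc ENNReal.ofReal (∫ ω, Real.exp (-(Y 0 ω)) ∂μ) < ENNReal.ofReal 1 :=
        ENNReal.ofReal_lt_ofReal_iff (by norm_num) |>.2 h2
    _ = 1 := ENNReal.ofReal_one

lemma lintegral_exp_neg_rS (hm : ∀ n, Measurable (Y n))
    (hindep : iIndepFun Y μ)
    (hident : ∀ n, IdentDistrib (Y n) (Y 0) μ μ) (n : ℕ) :
    ∫⁻ ω, ENNReal.ofReal (Real.exp (-(rS Y n ω))) ∂μ = rRho μ Y ^ n := by
  induction n with
  | zero => simp [rS]
  | succ n ih =>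
    have hin : IndepFun (rS Y n) (Y n) μ := by
      rw [rS_fun_eq]; exact hindep.indepFun_sum_range_succ hm n
    have hcomp : IndepFun (fun ω => ENNReal.ofReal (Real.exp (-(rS Y n ω))))
        (fun ω => ENNReal.ofReal (Real.exp (-(Y n ω)))) μ :=
      hin.comp phi_meas phi_meas
    have heq : ∀ ω, ENNReal.ofReal (Real.exp (-(rS Y (n+1) ω))) =
        ENNReal.ofReal (Real.exp (-(rS Y n ω))) * ENNReal.ofReal (Real.exp (-(Y n ω))) := by
      intro ω
      rw [rS_succ, neg_add, Real.exp_add, ENNReal.ofReal_mul (Real.exp_pos _).le]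
    calc ∫⁻ ω, ENNReal.ofReal (Real.exp (-(rS Y (n+1) ω))) ∂μ
        = ∫⁻ ω, ENNReal.ofReal (Real.exp (-(rS Y n ω)))
            * ENNReal.ofReal (Real.exp (-(Y n ω))) ∂μ := by
          exact lintegral_congr heq
      _ = (∫⁻ ω, ENNReal.ofReal (Real.exp (-(rS Y n ω))) ∂μ)
            * ∫⁻ ω, ENNReal.ofReal (Real.exp (-(Y n ω))) ∂μ :=
          lintegral_mul_eq_lintegral_mul_lintegral_of_indepFun
            (phi_meas.comp (rS_meas hm n)) (phi_meas.comp (hm n)) hcomp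
      _ = rRho μ Y ^ n * rRho μ Y := by
          rw [ih]; congr 1; exact ((hident n).comp phi_meas).lintegral_eq
      _ = rRho μ Y ^ (n + 1) := (pow_succ _ _).symm

lemma measure_rS_le (hm : ∀ n, Measurable (Y n))
    (hindep : iIndepFun Y μ)
    (hident : ∀ n, IdentDistrib (Y n) (Y 0) μ μ) (t : ℝ) (n : ℕ) :
    μ {ω | rS Y n ω ≤ t} ≤ ENNReal.ofReal (Real.exp t) * rRho μ Y ^ n := by
  have hsub : {ω | rS Y n ω ≤ t} ⊆
      {ω | ENNReal.ofReal (Real.exp (-t)) ≤ ENNReal.ofReal (Real.exp (-(rS Y n ω)))} := by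
    intro ω h
    simp only [Set.mem_setOf_eq] at h ⊢
    exact ENNReal.ofReal_le_ofReal (Real.exp_le_exp.2 (by linarith))
  have hmar := mul_meas_ge_le_lintegral₀ (μ := μ)
    ((phi_meas.comp (rS_meas hm n)).aemeasurable) (ENNReal.ofReal (Real.exp (-t)))
  simp only [Function.comp_apply] at hmar
  rw [lintegral_exp_neg_rS hm hindep hident n] at hmar
  have h2 : ENNReal.ofReal (Real.exp (-t)) * μ {ω | rS Y n ω ≤ t} ≤ rRho μ Y ^ n :=
    le_trans (mul_le_mul_right (measure_mono hsub) _) hmar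
  have hee : ENNReal.ofReal (Real.exp t) * ENNReal.ofReal (Real.exp (-t)) = 1 := by
    rw [← ENNReal.ofReal_mul (Real.exp_pos _).le, ← Real.exp_add, add_neg_cancel,
      Real.exp_zero, ENNReal.ofReal_one]
  calc μ {ω | rS Y n ω ≤ t}
      = ENNReal.ofReal (Real.exp t) * (ENNReal.ofReal (Real.exp (-t)) * μ {ω | rS Y n ω ≤ t}) := by
        rw [← mul_assoc, hee, one_mul]
    _ ≤ ENNReal.ofReal (Real.exp t) * rRho μ Y ^ n := mul_le_mul_right h2 _

lemma ae_bddAbove (hm : ∀ n, Measurable (Y n))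
    (hindep : iIndepFun Y μ)
    (hident : ∀ n, IdentDistrib (Y n) (Y 0) μ μ) (hpos : ∀ n ω, 0 < Y n ω) (t : ℝ) :
    ∀ᵐ ω ∂μ, BddAbove {n | rS Y n ω ≤ t} := by
  have hbad : μ {ω | ∀ n, rS Y n ω ≤ t} = 0 := by
    have hle : ∀ n, μ {ω | ∀ m, rS Y m ω ≤ t} ≤ ENNReal.ofReal (Real.exp t) * rRho μ Y ^ n :=
      fun n => le_trans (measure_mono (μ := μ) (fun ω h => h n)) (measure_rS_le hm hindep hident t n)
    have htend : Tendsto (fun n => ENNReal.ofReal (Real.exp t) * rRho μ Y ^ n) atTop (nhds 0) := by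
      have := ENNReal.Tendsto.const_mul (a := ENNReal.ofReal (Real.exp t))
        (ENNReal.tendsto_pow_atTop_nhds_zero_of_lt_one (rRho_lt_one (μ := μ) hm hpos))
        (Or.inr ENNReal.ofReal_ne_top)
      simpa using this
    exact le_antisymm (ge_of_tendsto' htend hle) zero_le
  rw [ae_iff]
  refine measure_mono_null ?_ hbad
  intro ω h
  simp only [Set.mem_setOf_eq] at h ⊢
  intro n
  by_contra hn
  push_neg at hn
  exact h ⟨n, fun m hmem => (((rS_strictMono hpos ω).lt_iff_lt).1
    (lt_of_le_of_lt hmem hn)).le⟩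

lemma rS_mono (hpos : ∀ n ω, 0 < Y n ω) (ω : Ω) {m n : ℕ} (h : m ≤ n) :
    rS Y m ω ≤ rS Y n ω := (rS_strictMono hpos ω).monotone h
lemma rS_zero (ω : Ω) : rS Y 0 ω = 0 := by simp [rS]
lemma rN_mem (hpos : ∀ n ω, 0 < Y n ω) {t : ℝ} (ht : 0 ≤ t) {ω : Ω}
    (hb : BddAbove {n | rS Y n ω ≤ t}) : rS Y (rN Y t ω) ω ≤ t :=
  Nat.sSup_mem ⟨0, by simpa [rS_zero] using ht⟩ hb
lemma rN_le_iff (hpos : ∀ n ω, 0 < Y n ω) {t : ℝ} (ht : 0 ≤ t) {ω : Ω}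
    (hb : BddAbove {n | rS Y n ω ≤ t}) (m : ℕ) :
    rS Y m ω ≤ t ↔ m ≤ rN Y t ω := by
  constructor
  · intro h; exact le_csSup hb h
  · intro h; exact le_trans (rS_mono hpos ω h) (rN_mem hpos ht hb)
lemma rN_succ_gt (hpos : ∀ n ω, 0 < Y n ω) {t : ℝ} (ht : 0 ≤ t) {ω : Ω}
    (hb : BddAbove {n | rS Y n ω ≤ t}) : t < rS Y (rN Y t ω + 1) ω := by
  by_contra h
  push_neg at h
  have := (rN_le_iff hpos ht hb (rN Y t ω + 1)).1 h
  omega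

-- new material
lemma rN_count (hpos : ∀ n ω, 0 < Y n ω) {t : ℝ} (ht : 0 ≤ t) {ω : Ω}
    (hb : BddAbove {n | rS Y n ω ≤ t}) :
    (rN Y t ω : ℝ≥0∞)
      = ∑' n : ℕ, Set.indicator {ω' | rS Y (n+1) ω' ≤ t} (fun _ => (1:ℝ≥0∞)) ω := by
  rw [tsum_eq_sum (s := Finset.range (rN Y t ω))
    (fun n hn => by
      have h1 : ¬ (n + 1 ≤ rN Y t ω) := by simp at hn; omega
      have h2 : ¬ rS Y (n+1) ω ≤ t := fun hc => h1 ((rN_le_iff hpos ht hb (n+1)).1 hc)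
      exact Set.indicator_of_notMem
        (show ω ∉ {ω' | rS Y (n+1) ω' ≤ t} from h2) _)]
  rw [Finset.sum_congr rfl (fun n hn => (by
    have h1 : n + 1 ≤ rN Y t ω := by simp at hn; omega
    have h2 : rS Y (n+1) ω ≤ t := (rN_le_iff hpos ht hb (n+1)).2 h1
    exact Set.indicator_of_mem (show ω ∈ {ω' | rS Y (n+1) ω' ≤ t} from h2) _ :
      Set.indicator {ω' | rS Y (n+1) ω' ≤ t} (fun _ => (1:ℝ≥0∞)) ω = 1))]
  simp

lemma measurableSet_rS_le (hm : ∀ n, Measurable (Y n)) (t : ℝ) (n : ℕ) :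
    MeasurableSet {ω | rS Y n ω ≤ t} :=
  measurableSet_le (rS_meas hm n) measurable_const

lemma lintegral_rN (hm : ∀ n, Measurable (Y n))
    (hindep : iIndepFun Y μ)
    (hident : ∀ n, IdentDistrib (Y n) (Y 0) μ μ) (hpos : ∀ n ω, 0 < Y n ω)
    {t : ℝ} (ht : 0 ≤ t) :
    ∫⁻ ω, (rN Y t ω : ℝ≥0∞) ∂μ = ∑' n : ℕ, μ {ω | rS Y (n+1) ω ≤ t} := by
  rw [lintegral_congr_ae ((ae_bddAbove hm hindep hident hpos t).mono
    (fun ω hb => rN_count hpos ht hb))]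
  rw [lintegral_tsum (fun n =>
    (measurable_const.indicator (measurableSet_rS_le hm t (n+1))).aemeasurable)]
  exact tsum_congr (fun n => lintegral_indicator_one (measurableSet_rS_le hm t (n+1)))

lemma tsum_indicator_eq (hpos : ∀ n ω, 0 < Y n ω) {t : ℝ} (ht : 0 ≤ t) {ω : Ω}
    (hb : BddAbove {n | rS Y n ω ≤ t}) :
    ∑' n : ℕ, Set.indicator {ω' | rS Y n ω' ≤ t} (fun ω' => ENNReal.ofReal (Y n ω')) ω
      = ENNReal.ofReal (rS Y (rN Y t ω + 1) ω) := by
  rw [tsum_eq_sum (s := Finset.range (rN Y t ω + 1))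
    (fun n hn => by
      have h1 : ¬ (n ≤ rN Y t ω) := by simp at hn; omega
      have h2 : ¬ rS Y n ω ≤ t := fun hc => h1 ((rN_le_iff hpos ht hb n).1 hc)
      exact Set.indicator_of_notMem
        (show ω ∉ {ω' | rS Y n ω' ≤ t} from h2) _)]
  rw [Finset.sum_congr rfl (fun n hn => (by
    have h1 : n ≤ rN Y t ω := by simp at hn; omega
    have h2 : rS Y n ω ≤ t := (rN_le_iff hpos ht hb n).2 h1
    exact Set.indicator_of_mem (show ω ∈ {ω' | rS Y n ω' ≤ t} from h2) _ :
      Set.indicator {ω' | rS Y n ω' ≤ t} (fun ω' => ENNReal.ofReal (Y n ω')) ω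
        = ENNReal.ofReal (Y n ω)))]
  rw [← ENNReal.ofReal_sum_of_nonneg (fun n _ => (hpos n ω).le)]
  rfl

/-- Wald's identity for the renewal process, in `ℝ≥0∞`. -/
lemma wald (hm : ∀ n, Measurable (Y n))
    (hindep : iIndepFun Y μ)
    (hident : ∀ n, IdentDistrib (Y n) (Y 0) μ μ) (hpos : ∀ n ω, 0 < Y n ω)
    {t : ℝ} (ht : 0 ≤ t) :
    ∫⁻ ω, (∑' n : ℕ, Set.indicator {ω' | rS Y n ω' ≤ t}
        (fun ω' => ENNReal.ofReal (Y n ω')) ω) ∂μ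
      = (∫⁻ ω, ENNReal.ofReal (Y 0 ω) ∂μ) * (1 + ∫⁻ ω, (rN Y t ω : ℝ≥0∞) ∂μ) := by
  have hmind : ∀ n : ℕ, Measurable (fun ω =>
      Set.indicator {ω' | rS Y n ω' ≤ t} (fun ω' => ENNReal.ofReal (Y n ω')) ω) :=
    fun n => ((hm n).ennreal_ofReal).indicator (measurableSet_rS_le hm t n)
  rw [lintegral_tsum (fun n => (hmind n).aemeasurable)]
  have hterm : ∀ n : ℕ,
      ∫⁻ ω, Set.indicator {ω' | rS Y n ω' ≤ t} (fun ω' => ENNReal.ofReal (Y n ω')) ω ∂μ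
        = (∫⁻ ω, ENNReal.ofReal (Y 0 ω) ∂μ) * μ {ω | rS Y n ω ≤ t} := by
    intro n
    have hsplit : ∀ ω, Set.indicator {ω' | rS Y n ω' ≤ t} (fun ω' => ENNReal.ofReal (Y n ω')) ω
        = ENNReal.ofReal (Y n ω)
          * Set.indicator {ω' | rS Y n ω' ≤ t} (fun _ => (1:ℝ≥0∞)) ω := by
      intro ω
      by_cases h : rS Y n ω ≤ t
      · have h' : ω ∈ {ω' | rS Y n ω' ≤ t} := h
        rw [Set.indicator_of_mem h', Set.indicator_of_mem h', mul_one]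
      · have h' : ω ∉ {ω' | rS Y n ω' ≤ t} := h
        rw [Set.indicator_of_notMem h', Set.indicator_of_notMem h', mul_zero]
    have hindfun : (fun ω => Set.indicator {ω' | rS Y n ω' ≤ t} (fun _ => (1:ℝ≥0∞)) ω)
        = (fun x : ℝ => Set.indicator (Set.Iic t) (fun _ => (1:ℝ≥0∞)) x) ∘ (rS Y n) := by
      ext ω
      by_cases h : rS Y n ω ≤ t
      · rw [Set.indicator_of_mem (show ω ∈ {ω' | rS Y n ω' ≤ t} from h),
          Function.comp_apply,
          Set.indicator_of_mem (show rS Y n ω ∈ Set.Iic t from h)]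
      · rw [Set.indicator_of_notMem (show ω ∉ {ω' | rS Y n ω' ≤ t} from h),
          Function.comp_apply,
          Set.indicator_of_notMem (show rS Y n ω ∉ Set.Iic t from h)]
    have hIF : IndepFun (fun ω => ENNReal.ofReal (Y n ω))
        (fun ω => Set.indicator {ω' | rS Y n ω' ≤ t} (fun _ => (1:ℝ≥0∞)) ω) μ := by
      rw [hindfun]
      have hin : IndepFun (rS Y n) (Y n) μ := by
        rw [rS_fun_eq]; exact hindep.indepFun_sum_range_succ hm n
      exact (hin.comp (measurable_const.indicator measurableSet_Iic)
        ENNReal.measurable_ofReal).symm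
    calc ∫⁻ ω, Set.indicator {ω' | rS Y n ω' ≤ t} (fun ω' => ENNReal.ofReal (Y n ω')) ω ∂μ
        = ∫⁻ ω, (ENNReal.ofReal (Y n ω))
            * Set.indicator {ω' | rS Y n ω' ≤ t} (fun _ => (1:ℝ≥0∞)) ω ∂μ :=
          lintegral_congr hsplit
      _ = (∫⁻ ω, ENNReal.ofReal (Y n ω) ∂μ)
            * ∫⁻ ω, Set.indicator {ω' | rS Y n ω' ≤ t} (fun _ => (1:ℝ≥0∞)) ω ∂μ :=
          lintegral_mul_eq_lintegral_mul_lintegral_of_indepFun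
            ((hm n).ennreal_ofReal)
            (measurable_const.indicator (measurableSet_rS_le hm t n)) hIF
      _ = (∫⁻ ω, ENNReal.ofReal (Y 0 ω) ∂μ) * μ {ω | rS Y n ω ≤ t} := by
          have e1 : ∫⁻ ω, Set.indicator {ω' | rS Y n ω' ≤ t} (fun _ => (1:ℝ≥0∞)) ω ∂μ
              = μ {ω | rS Y n ω ≤ t} :=
            lintegral_indicator_one (measurableSet_rS_le hm t n)
          rw [e1]
          congr 1
          exact ((hident n).comp ENNReal.measurable_ofReal).lintegral_eq
  rw [tsum_congr hterm, ENNReal.tsum_mul_left]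
  congr 1
  rw [tsum_eq_zero_add' ENNReal.summable]
  have h0 : {ω : Ω | rS Y 0 ω ≤ t} = Set.univ := by
    ext ω; simp [rS_zero, ht]
  rw [h0, measure_univ, lintegral_rN hm hindep hident hpos ht]


lemma wald_lower (hm : ∀ n, Measurable (Y n))
    (hindep : iIndepFun Y μ)
    (hident : ∀ n, IdentDistrib (Y n) (Y 0) μ μ) (hpos : ∀ n ω, 0 < Y n ω)
    {t : ℝ} (ht : 0 ≤ t) :
    ENNReal.ofReal t
      ≤ (∫⁻ ω, ENNReal.ofReal (Y 0 ω) ∂μ) * (1 + ∫⁻ ω, (rN Y t ω : ℝ≥0∞) ∂μ) := by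
  rw [← wald hm hindep hident hpos ht]
  have h1 : ENNReal.ofReal t = ∫⁻ _, ENNReal.ofReal t ∂μ := by
    rw [lintegral_const, measure_univ, mul_one]
  rw [h1]
  refine lintegral_mono_ae ((ae_bddAbove hm hindep hident hpos t).mono fun ω hb => ?_)
  rw [tsum_indicator_eq hpos ht hb]
  exact ENNReal.ofReal_le_ofReal (rN_succ_gt hpos ht hb).le

lemma wald_upper (hm : ∀ n, Measurable (Y n))
    (hindep : iIndepFun Y μ)
    (hident : ∀ n, IdentDistrib (Y n) (Y 0) μ μ) (hpos : ∀ n ω, 0 < Y n ω)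
    {c : ℝ} (hbdd : ∀ n ω, Y n ω ≤ c) {t : ℝ} (ht : 0 ≤ t) :
    (∫⁻ ω, ENNReal.ofReal (Y 0 ω) ∂μ) * (1 + ∫⁻ ω, (rN Y t ω : ℝ≥0∞) ∂μ)
      ≤ ENNReal.ofReal (t + c) := by
  rw [← wald hm hindep hident hpos ht]
  have h1 : ENNReal.ofReal (t + c) = ∫⁻ _, ENNReal.ofReal (t + c) ∂μ := by
    rw [lintegral_const, measure_univ, mul_one]
  rw [h1]
  refine lintegral_mono_ae ((ae_bddAbove hm hindep hident hpos t).mono fun ω hb => ?_)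
  rw [tsum_indicator_eq hpos ht hb]
  refine ENNReal.ofReal_le_ofReal ?_
  rw [rS_succ]
  have := rN_mem hpos ht hb
  have := hbdd (rN Y t ω) ω
  linarith

lemma integral_rN_eq (hm : ∀ n, Measurable (Y n))
    (hindep : iIndepFun Y μ)
    (hident : ∀ n, IdentDistrib (Y n) (Y 0) μ μ) (hpos : ∀ n ω, 0 < Y n ω)
    {t : ℝ} (ht : 0 ≤ t) :
    ∫ ω, (rN Y t ω : ℝ) ∂μ = (∫⁻ ω, (rN Y t ω : ℝ≥0∞) ∂μ).toReal := by
  have hmeasF : Measurable (fun ω =>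
      ∑' n : ℕ, Set.indicator {ω' | rS Y (n+1) ω' ≤ t} (fun _ => (1:ℝ≥0∞)) ω) :=
    Measurable.ennreal_tsum (fun n => measurable_const.indicator (measurableSet_rS_le hm t (n+1)))
  have hae : (fun ω => ((rN Y t ω : ℕ) : ℝ)) =ᵐ[μ] (fun ω =>
      (∑' n : ℕ, Set.indicator {ω' | rS Y (n+1) ω' ≤ t} (fun _ => (1:ℝ≥0∞)) ω).toReal) := by
    refine (ae_bddAbove hm hindep hident hpos t).mono fun ω hb => ?_
    simp only
    rw [← rN_count hpos ht hb]
    simp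
  have hsm : AEStronglyMeasurable (fun ω => ((rN Y t ω : ℕ) : ℝ)) μ :=
    (hmeasF.ennreal_toReal.aestronglyMeasurable).congr hae.symm
  rw [integral_eq_lintegral_of_nonneg_ae
    (Filter.Eventually.of_forall fun ω => Nat.cast_nonneg _) hsm]
  congr 1
  exact lintegral_congr fun ω => ENNReal.ofReal_natCast _


end Renewal

/-- Elementary renewal theorem: `E[N(t)]/t → 1/τ`. -/
theorem elementary_renewal_theorem
    {Ω : Type*} [MeasurableSpace Ω] (μ : Measure Ω) [IsProbabilityMeasure μ]
    (X : ℕ → Ω → ℝ)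
    (hmeas : ∀ n, Measurable (X n))
    (hindep : iIndepFun X μ)
    (hident : ∀ n, IdentDistrib (X n) (X 0) μ μ)
    (hpos : ∀ n ω, 0 < X n ω)
    (hXint : Integrable (X 0) μ)
    (τ : ℝ) (hτ : μ[X 0] = τ) :
    Tendsto (fun t : ℝ => (∫ ω, (rN X t ω : ℝ) ∂μ) / t) atTop (nhds (1 / τ)) := by
  classical
  -- positivity of τ
  have hτ0 : 0 < τ := by
    rw [← hτ]
    rw [integral_pos_iff_support_of_nonneg_ae
      (Filter.Eventually.of_forall fun ω => (hpos 0 ω).le) hXint]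
    have hsupp : Function.support (X 0) = Set.univ := by
      ext ω; simp only [Function.mem_support, Set.mem_univ, iff_true]
      exact (hpos 0 ω).ne'
    rw [hsupp]; simp
  have hτne : τ ≠ 0 := hτ0.ne'
  have hofτ : ∫⁻ ω, ENNReal.ofReal (X 0 ω) ∂μ = ENNReal.ofReal τ := by
    rw [← hτ]
    exact (ofReal_integral_eq_lintegral_ofReal hXint
      (Filter.Eventually.of_forall fun ω => (hpos 0 ω).le)).symm
  -- the truncated processes
  set Xc : ℝ → ℕ → Ω → ℝ := fun c n ω => min (X n ω) c with hXcdef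
  have hmc : ∀ c n, Measurable (Xc c n) := fun c n => (hmeas n).min measurable_const
  have hindepc : ∀ c, iIndepFun (Xc c) μ := fun c =>
    hindep.comp (fun _ => fun x => min x c) (fun _ => measurable_id.min measurable_const)
  have hidentc : ∀ c n, IdentDistrib (Xc c n) (Xc c 0) μ μ := fun c n =>
    (hident n).comp (measurable_id.min measurable_const)
  have hposc : ∀ c, 0 < c → ∀ n ω, 0 < Xc c n ω := fun c hc n ω => lt_min (hpos n ω) hc
  have hbddc : ∀ c n ω, Xc c n ω ≤ c := fun c n ω => min_le_right _ _
  have hintc : ∀ c, 0 < c → Integrable (Xc c 0) μ := by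
    intro c hc
    refine hXint.mono (hmc c 0).aestronglyMeasurable
      (Filter.Eventually.of_forall fun ω => ?_)
    rw [Real.norm_eq_abs, Real.norm_eq_abs, abs_of_pos (hposc c hc 0 ω),
      abs_of_pos (hpos 0 ω)]
    exact min_le_left _ _
  set τtr : ℝ → ℝ := fun c => ∫ ω, min (X 0 ω) c ∂μ with hτtrdef
  have hτtr_pos : ∀ c, 0 < c → 0 < τtr c := by
    intro c hc
    rw [hτtrdef]
    rw [integral_pos_iff_support_of_nonneg_ae
      (Filter.Eventually.of_forall fun ω => (hposc c hc 0 ω).le) (hintc c hc)]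
    have hsupp : Function.support (fun ω => min (X 0 ω) c) = Set.univ := by
      ext ω; simp only [Function.mem_support, Set.mem_univ, iff_true]
      exact (hposc c hc 0 ω).ne'
    rw [hsupp]; simp
  have hofτtr : ∀ c, 0 < c → ∫⁻ ω, ENNReal.ofReal (Xc c 0 ω) ∂μ = ENNReal.ofReal (τtr c) := by
    intro c hc
    rw [hτtrdef]
    exact (ofReal_integral_eq_lintegral_ofReal (hintc c hc)
      (Filter.Eventually.of_forall fun ω => (hposc c hc 0 ω).le)).symm
  set G : ℝ → ℝ≥0∞ := fun t => ∫⁻ ω, (rN X t ω : ℝ≥0∞) ∂μ with hGdef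
  set Gc : ℝ → ℝ → ℝ≥0∞ := fun c t => ∫⁻ ω, (rN (Xc c) t ω : ℝ≥0∞) ∂μ with hGcdef
  -- comparison
  have hGle : ∀ c t, 0 < c → 0 ≤ t → G t ≤ Gc c t := by
    intro c t hc ht
    refine lintegral_mono_ae
      ((ae_bddAbove (hmc c) (hindepc c) (hidentc c) (hposc c hc) t).mono fun ω hb => ?_)
    refine Nat.cast_le.2 ?_
    refine csSup_le_csSup hb ⟨0, by simp [rS_zero, ht]⟩ ?_
    intro n hn
    simp only [Set.mem_setOf_eq] at hn ⊢
    refine le_trans ?_ hn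
    exact Finset.sum_le_sum (fun i _ => min_le_left _ _)
  -- finiteness
  have hGcfin : ∀ c t, 0 < c → 0 ≤ t → Gc c t ≠ ∞ := by
    intro c t hc ht
    intro htop
    have hw := wald_upper (hmc c) (hindepc c) (hidentc c) (hposc c hc) (hbddc c) ht
    rw [hofτtr c hc] at hw
    have hne : ENNReal.ofReal (τtr c) ≠ 0 := (ENNReal.ofReal_pos.2 (hτtr_pos c hc)).ne'
    rw [show (∫⁻ ω, ((rN (Xc c) t ω : ℕ) : ℝ≥0∞) ∂μ) = Gc c t from rfl, htop,
      add_top, ENNReal.mul_top hne] at hw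
    exact ENNReal.ofReal_ne_top (top_le_iff.1 hw)
  have hGfin : ∀ t, 0 ≤ t → G t ≠ ∞ := fun t ht =>
    ne_top_of_le_ne_top (hGcfin 1 t one_pos ht) (hGle 1 t one_pos ht)
  -- real-valued bounds
  have hm_eq : ∀ t, 0 ≤ t → ∫ ω, (rN X t ω : ℝ) ∂μ = (G t).toReal := fun t ht =>
    integral_rN_eq hmeas hindep hident hpos ht
  have hlow : ∀ t, 0 ≤ t → t ≤ τ * (1 + (G t).toReal) := by
    intro t ht
    have h := wald_lower hmeas hindep hident hpos ht
    rw [hofτ] at h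
    have hfin : ENNReal.ofReal τ * (1 + G t) ≠ ∞ :=
      ENNReal.mul_ne_top ENNReal.ofReal_ne_top
        (ENNReal.add_ne_top.2 ⟨ENNReal.one_ne_top, hGfin t ht⟩)
    calc t = (ENNReal.ofReal t).toReal := (ENNReal.toReal_ofReal ht).symm
      _ ≤ (ENNReal.ofReal τ * (1 + G t)).toReal := ENNReal.toReal_mono hfin h
      _ = τ * (1 + (G t).toReal) := by
          rw [ENNReal.toReal_mul, ENNReal.toReal_ofReal hτ0.le,
            ENNReal.toReal_add ENNReal.one_ne_top (hGfin t ht), ENNReal.toReal_one]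
  have hup : ∀ c, 0 < c → ∀ t, 0 ≤ t → τtr c * (1 + (G t).toReal) ≤ t + c := by
    intro c hc t ht
    have h1 : ENNReal.ofReal (τtr c) * (1 + G t)
        ≤ ENNReal.ofReal (τtr c) * (1 + Gc c t) :=
      mul_le_mul_right (add_le_add_right (hGle c t hc ht) _) _
    have h2 := wald_upper (hmc c) (hindepc c) (hidentc c) (hposc c hc) (hbddc c) ht
    rw [hofτtr c hc] at h2
    have h3 : ENNReal.ofReal (τtr c) * (1 + G t) ≤ ENNReal.ofReal (t + c) := h1.trans h2
    calc τtr c * (1 + (G t).toReal)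
        = (ENNReal.ofReal (τtr c) * (1 + G t)).toReal := by
          rw [ENNReal.toReal_mul, ENNReal.toReal_ofReal (hτtr_pos c hc).le,
            ENNReal.toReal_add ENNReal.one_ne_top (hGfin t ht), ENNReal.toReal_one]
      _ ≤ (ENNReal.ofReal (t + c)).toReal := ENNReal.toReal_mono ENNReal.ofReal_ne_top h3
      _ = t + c := ENNReal.toReal_ofReal (by linarith)
  -- τtr n → τ
  have htr_tendsto : Tendsto (fun n : ℕ => τtr (n : ℝ)) atTop (nhds τ) := by
    rw [← hτ]
    refine tendsto_integral_of_dominated_convergence (bound := X 0)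
      (fun n => (hmc (n:ℝ) 0).aestronglyMeasurable) hXint
      (fun n => Filter.Eventually.of_forall fun ω => ?_)
      (Filter.Eventually.of_forall fun ω => ?_)
    · rw [Real.norm_eq_abs, abs_of_nonneg (le_min (hpos 0 ω).le (Nat.cast_nonneg n))]
      exact min_le_left _ _
    · refine Filter.Tendsto.congr' ?_ tendsto_const_nhds
      filter_upwards [eventually_ge_atTop ⌈X 0 ω⌉₊] with n hn
      have : X 0 ω ≤ (n : ℝ) := le_trans (Nat.le_ceil _) (Nat.cast_le.2 hn)
      exact (min_eq_left this).symm
  -- conclusion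
  rw [tendsto_order]
  constructor
  · -- lower bound: b < 1/τ
    intro b hb
    have hT : Tendsto (fun t : ℝ => 1 / τ - 1 / t) atTop (nhds (1 / τ)) := by
      have h0 : Tendsto (fun t : ℝ => 1 / t) atTop (nhds 0) := by
        simpa [one_div] using tendsto_inv_atTop_zero
      simpa using tendsto_const_nhds.sub h0
    filter_upwards [hT.eventually (eventually_gt_nhds hb), eventually_ge_atTop (1:ℝ)]
      with t h1 h2
    have htpos : (0:ℝ) < t := lt_of_lt_of_le one_pos h2
    have ht0 : (0:ℝ) ≤ t := htpos.le
    rw [hm_eq t ht0]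
    have h3 : t / τ - 1 ≤ (G t).toReal := by
      rw [sub_le_iff_le_add, div_le_iff₀ hτ0]
      linarith [hlow t ht0]
    have htne : t ≠ 0 := htpos.ne'
    have h4 : (t / τ - 1) / t ≤ (G t).toReal / t := by gcongr
    have h5 : (t / τ - 1) / t = 1 / τ - 1 / t := by
      field_simp
    calc b < 1 / τ - 1 / t := h1
      _ = (t / τ - 1) / t := h5.symm
      _ ≤ (G t).toReal / t := h4
  · -- upper bound: b > 1/τ
    intro b hb
    have hb0 : (0:ℝ) < b := lt_trans (by positivity) hb
    have h1b : 1 / b < τ := by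
      rw [div_lt_iff₀ hb0]
      rw [gt_iff_lt, div_lt_iff₀ hτ0] at hb
      linarith [hb]
    obtain ⟨n, hn2, hn1⟩ :=
      ((htr_tendsto.eventually (eventually_gt_nhds h1b)).and (eventually_ge_atTop 1)).exists
    set c : ℝ := (n : ℝ) with hcdef
    have hc : (0:ℝ) < c := by
      rw [hcdef]
      exact_mod_cast Nat.lt_of_lt_of_le Nat.zero_lt_one hn1
    have hτc0 : 0 < τtr c := hτtr_pos c hc
    have hblt : 1 / τtr c < b := by
      rw [div_lt_iff₀ hτc0]
      rw [div_lt_iff₀ hb0] at hn2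
      linarith [hn2]
    have hT : Tendsto (fun t : ℝ => (1 + c / t) / τtr c) atTop (nhds (1 / τtr c)) := by
      have h0 : Tendsto (fun t : ℝ => c / t) atTop (nhds 0) :=
        tendsto_const_nhds.div_atTop tendsto_id
      have := ((tendsto_const_nhds (x := (1:ℝ))).add h0).div_const (τtr c)
      simpa using this
    filter_upwards [hT.eventually (eventually_lt_nhds hblt), eventually_ge_atTop (1:ℝ)]
      with t h1 h2
    have htpos : (0:ℝ) < t := lt_of_lt_of_le one_pos h2
    have ht0 : (0:ℝ) ≤ t := htpos.le
    rw [hm_eq t ht0]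
    have h3 : (G t).toReal ≤ (t + c) / τtr c := by
      rw [le_div_iff₀ hτc0]
      linarith [hup c hc t ht0]
    have htne : t ≠ 0 := htpos.ne'
    have hτcne : τtr c ≠ 0 := hτc0.ne'
    have h4 : (G t).toReal / t ≤ ((t + c) / τtr c) / t := by gcongr
    have h5 : ((t + c) / τtr c) / t = (1 + c / t) / τtr c := by
      have he : 1 + c / t = (t + c) / t := by rw [add_div, div_self htne]
      rw [he, div_div, div_div, mul_comm]
    calc (G t).toReal / t ≤ ((t + c) / τtr c) / t := h4
      _ = (1 + c / t) / τtr c := h5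
      _ < b := h1
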